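/- Let n and r be positive integers with n ≥ 2r, let 𝓑 be a base of size l for the symmetric group S_n acting on the set of r-element subsets of [n], and let k be a positive integer with l·r ≥ Σ_{i=1}^{k-1} i·C(l,i). Then n ≤ Σ_{i=0}^{k-1} C(l,i) + m_r(l,k). -/

import Mathlib

/-- `𝓑` is a base for the symmetric group `S_n` acting on `r`-element subsets of `[n]`. -/
def IsBaseSym (n r : ℕ) (𝓑 : Finset (Finset (Fin n))) : Prop :=
  (∀ B ∈ 𝓑, B.card = r) ∧
    ∀ σ : Equiv.Perm (Fin n), (∀ B ∈ 𝓑, B.image σ = B) → σ = 1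

/-- The rational number `m_r(l,k) = (1/k)(l·r − Σ_{i=1}^{k-1} i·C(l,i))`. -/
def mr (r l k : ℕ) : ℚ :=
  ((l : ℚ) * r - ∑ i ∈ Finset.Icc 1 (k - 1), (i : ℚ) * (l.choose i)) / k

open Finset

/-- If `𝓑` is a base of size `l` for `S_n` acting on `r`-subsets of `[n]` (with
`n ≥ 2r`), and `k` is a positive integer with `l·r ≥ Σ_{i=1}^{k-1} i·C(l,i)`, then
`n ≤ Σ_{i=0}^{k-1} C(l,i) + m_r(l,k)`. -/
theorem base_gives_upper_bound (n r l k : ℕ) (hn : 0 < n) (hr : 0 < r)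
    (h2r : 2 * r ≤ n) (𝓑 : Finset (Finset (Fin n))) (hbase : IsBaseSym n r 𝓑)
    (hl : 𝓑.card = l) (hk : 0 < k)
    (hlr : (∑ i ∈ Finset.Icc 1 (k - 1), (i : ℚ) * (l.choose i)) ≤ (l : ℚ) * r) :
    (n : ℚ) ≤ (∑ i ∈ Finset.range k, (l.choose i : ℚ)) + mr r l k := by
  classical
  obtain ⟨hcard, hstab⟩ := hbase
  set S : Fin n → Finset (Finset (Fin n)) := fun x => 𝓑.filter (fun B => x ∈ B) with hS
  -- injectivity of the signature map
  have hinj : Function.Injective S := by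
    intro x y hxy
    by_contra hne
    have hσ : Equiv.swap x y = 1 := by
      apply hstab
      intro B hB
      have hiff : x ∈ B ↔ y ∈ B := by
        constructor
        · intro hx
          have h1 : B ∈ S x := mem_filter.mpr ⟨hB, hx⟩
          rw [hxy] at h1
          exact (mem_filter.mp h1).2
        · intro hy
          have h1 : B ∈ S y := mem_filter.mpr ⟨hB, hy⟩
          rw [← hxy] at h1
          exact (mem_filter.mp h1).2
      apply Finset.eq_of_subset_of_card_le
      · intro z hz
        rw [Finset.mem_image] at hz
        obtain ⟨a, ha, rfl⟩ := hz
        rcases eq_or_ne a x with rfl | hax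
        · rw [Equiv.swap_apply_left]; exact hiff.mp ha
        rcases eq_or_ne a y with rfl | hay
        · rw [Equiv.swap_apply_right]; exact hiff.mpr ha
        · rw [Equiv.swap_apply_of_ne_of_ne hax hay]; exact ha
      · rw [Finset.card_image_of_injective _ (Equiv.injective _)]
    have := congrArg (fun σ : Equiv.Perm (Fin n) => σ x) hσ
    simp [Equiv.swap_apply_left] at this
    exact hne this.symm
  -- total mass of signatures
  have hmass : ∑ x : Fin n, (S x).card = l * r := by
    have : ∑ x : Fin n, (S x).card = ∑ B ∈ 𝓑, B.card := by
      simp only [hS, Finset.card_filter]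
      rw [Finset.sum_comm]
      refine Finset.sum_congr rfl fun B hB => ?_
      simp [Finset.card_filter]
    rw [this]
    rw [Finset.sum_congr rfl fun B hB => hcard B hB, Finset.sum_const, hl, smul_eq_mul]
  -- fiber bound
  have hfiber : ∀ i : ℕ, (univ.filter (fun x => (S x).card = i)).card ≤ l.choose i := by
    intro i
    have : (univ.filter (fun x => (S x).card = i)).card ≤ (𝓑.powersetCard i).card := by
      apply Finset.card_le_card_of_injOn S
      · intro x hx
        rw [Finset.mem_coe, Finset.mem_filter] at hx
        exact Finset.mem_powersetCard.mpr ⟨Finset.filter_subset _ _, hx.2⟩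
      · exact fun a _ b _ h => hinj h
    rwa [Finset.card_powersetCard, hl] at this
  have hcle : ∀ x, (S x).card ≤ l := fun x => hl ▸ Finset.card_le_card (filter_subset _ _)
  set N := max (l + 1) k with hN
  -- key Nat inequality
  have hkey : k * n ≤ (∑ i ∈ range k, l.choose i * (k - i)) + l * r := by
    have h1 : k * n = ∑ _x : Fin n, k := by simp [mul_comm]
    have h2 : ∑ _x : Fin n, k ≤ ∑ x : Fin n, ((k - (S x).card) + (S x).card) :=
      Finset.sum_le_sum fun x _ => le_tsub_add
    have h3 : ∑ x : Fin n, ((k - (S x).card) + (S x).card)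
        = (∑ x : Fin n, (k - (S x).card)) + l * r := by
      rw [Finset.sum_add_distrib, hmass]
    have h4 : ∑ x : Fin n, (k - (S x).card)
        = ∑ i ∈ range N, ∑ x ∈ univ.filter (fun x => (S x).card = i), (k - (S x).card) := by
      rw [Finset.sum_fiberwise_of_maps_to]
      intro x _
      exact Finset.mem_range.mpr (lt_of_le_of_lt (hcle x)
        (lt_of_lt_of_le (Nat.lt_succ_self l) (le_max_left _ _)))
    have h5 : ∀ i ∈ range N, (∑ x ∈ univ.filter (fun x => (S x).card = i), (k - (S x).card))
        ≤ l.choose i * (k - i) := by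
      intro i _
      have : ∑ x ∈ univ.filter (fun x => (S x).card = i), (k - (S x).card)
          = (univ.filter (fun x => (S x).card = i)).card * (k - i) := by
        rw [Finset.sum_congr rfl fun x hx => by
          rw [(Finset.mem_filter.mp hx).2], Finset.sum_const, smul_eq_mul]
      rw [this]
      exact Nat.mul_le_mul_right _ (hfiber i)
    have h6 : ∑ i ∈ range N, l.choose i * (k - i) = ∑ i ∈ range k, l.choose i * (k - i) := by
      symm
      apply Finset.sum_subset (Finset.range_subset_range.mpr (le_max_right _ _))
      intro i _ hik
      rw [Finset.mem_range, not_lt] at hik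
      rw [Nat.sub_eq_zero_of_le hik, mul_zero]
    calc k * n = ∑ _x : Fin n, k := h1
      _ ≤ _ := h2
      _ = _ := h3
      _ ≤ (∑ i ∈ range N, l.choose i * (k - i)) + l * r := by
          rw [h4]; exact Nat.add_le_add_right (Finset.sum_le_sum h5) _
      _ = _ := by rw [h6]
  -- cast to ℚ
  have hkeyQ : (k : ℚ) * n ≤ (∑ i ∈ range k, (l.choose i : ℚ) * ((k : ℚ) - i)) + l * r := by
    have := hkey
    have hcast : ((∑ i ∈ range k, l.choose i * (k - i) : ℕ) : ℚ)
        = ∑ i ∈ range k, (l.choose i : ℚ) * ((k : ℚ) - i) := by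
      push_cast
      refine Finset.sum_congr rfl fun i hi => ?_
      rw [Nat.cast_sub (le_of_lt (Finset.mem_range.mp hi))]
    calc (k : ℚ) * n = ((k * n : ℕ) : ℚ) := by push_cast; ring
      _ ≤ ((∑ i ∈ range k, l.choose i * (k - i)) + l * r : ℕ) := by exact_mod_cast hkey
      _ = _ := by
        push_cast [hcast]; push_cast; ring_nf
        exact (add_comm _ _).trans (congrArg (fun s => (l : ℚ) * r + s) (Finset.sum_congr rfl fun i _ => by ring))
  -- algebraic identities
  have hicc : ∑ i ∈ Icc 1 (k - 1), (i : ℚ) * (l.choose i) = ∑ i ∈ range k, (i : ℚ) * l.choose i := by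
    apply Finset.sum_subset
    · intro i hi
      rw [Finset.mem_Icc] at hi
      rw [Finset.mem_range]
      omega
    · intro i hi hni
      rw [Finset.mem_range] at hi
      rw [Finset.mem_Icc] at hni
      have : i = 0 := by omega
      simp [this]
  have e1 : ∑ i ∈ range k, (l.choose i : ℚ) * ((k : ℚ) - i)
      = (k : ℚ) * (∑ i ∈ range k, (l.choose i : ℚ)) - ∑ i ∈ range k, (i : ℚ) * l.choose i := by
    rw [Finset.mul_sum, ← Finset.sum_sub_distrib]
    exact Finset.sum_congr rfl fun i _ => by ring
  have hk0 : (0 : ℚ) < (k : ℚ) := by exact_mod_cast hk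
  rw [mr, hicc, ← sub_le_iff_le_add', le_div_iff₀ hk0]
  rw [e1] at hkeyQ
  ring_nf at hkeyQ ⊢
  linarith
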